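/- The real Lie subalgebra of the 2^n × 2^n complex matrices generated (under the matrix commutator) by the set {i Z_j : 1 ≤ j ≤ n} ∪ {i X_j X_{j+1} : 1 ≤ j ≤ n−1} equals the real linear span of {c_μ c_ν : 1 ≤ μ < ν ≤ 2n}, and this Lie algebra has real dimension n(2n−1). -/

import Mathlib

open Matrix Complex
open scoped Kronecker

attribute [local instance 100] LieRing.ofAssociativeRing

noncomputable section

abbrev QIdx (n : ℕ) := Fin n → Fin 2
abbrev NMat (n : ℕ) := Matrix (QIdx n) (QIdx n) ℂ
abbrev NMat2 (n : ℕ) := Matrix (QIdx n × QIdx n) (QIdx n × QIdx n) ℂ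

/-- The 2×2 Pauli X matrix. -/
def σX : Matrix (Fin 2) (Fin 2) ℂ := !![0, 1; 1, 0]
/-- The 2×2 Pauli Y matrix. -/
def σY : Matrix (Fin 2) (Fin 2) ℂ := !![0, -Complex.I; Complex.I, 0]
/-- The 2×2 Pauli Z matrix. -/
def σZ : Matrix (Fin 2) (Fin 2) ℂ := !![1, 0; 0, -1]

/-- Tensor (Kronecker) product of `n` one-qubit matrices, realized on index type `Fin n → Fin 2`. -/
def tensor {n : ℕ} (M : Fin n → Matrix (Fin 2) (Fin 2) ℂ) : NMat n :=
  Matrix.of fun f g => ∏ i, M i (f i) (g i)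

/-- The Jordan–Wigner Majorana operator `c_μ` (0-based index: `c_{2i} = Z^{⊗i} X I…`,
`c_{2i+1} = Z^{⊗i} Y I…`). -/
def majorana (n : ℕ) (μ : Fin (2 * n)) : NMat n :=
  tensor fun j =>
    if (j : ℕ) < (μ : ℕ) / 2 then σZ
    else if (j : ℕ) = (μ : ℕ) / 2 then (if (μ : ℕ) % 2 = 0 then σX else σY)
    else 1

/-- Ordered product `c^s` of the Majorana operators indexed by a subset `s`. -/
def cProd (n : ℕ) (s : Finset (Fin (2 * n))) : NMat n :=
  ((s.sort (· ≤ ·)).map (majorana n)).prod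

/-- The module `B_κ`: the complex span of products of `κ` distinct Majoranas. -/
def Bspace (n κ : ℕ) : Submodule ℂ (NMat n) :=
  Submodule.span ℂ {M | ∃ s : Finset (Fin (2 * n)), s.card = κ ∧ M = cProd n s}

/-- The Pauli string with `Z` on qubit `j` and identity elsewhere. -/
def pauliZ (n : ℕ) (j : Fin n) : NMat n := tensor fun k => if k = j then σZ else 1

/-- The Pauli string with `X` on qubits `j` and `j+1` and identity elsewhere. -/
def pauliXX (n : ℕ) (j : Fin n) : NMat n :=
  tensor fun k => if (k : ℕ) = (j : ℕ) ∨ (k : ℕ) = (j : ℕ) + 1 then σX else 1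

/-- The parity operator `P = Z^{⊗n}`. -/
def parity (n : ℕ) : NMat n := tensor fun _ => σZ


/-- The generators `{i Z_j} ∪ {i X_j X_{j+1}}` of the matchgate dynamical Lie algebra. -/
def genSet (n : ℕ) : Set (NMat n) :=
  {M | ∃ j : Fin n, M = Complex.I • pauliZ n j} ∪
  {M | ∃ j : Fin n, (j : ℕ) + 1 < n ∧ M = Complex.I • pauliXX n j}

/-- The real Lie algebra generated by `{i Z_j} ∪ {i X_j X_{j+1}}` equals the real span of
the products of two distinct Majoranas, and has real dimension `n(2n−1)`. -/
lemma tensor_mul {n : ℕ} (M N : Fin n → Matrix (Fin 2) (Fin 2) ℂ) :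
    tensor M * tensor N = tensor (fun i => M i * N i) := by
  ext f g
  simp only [tensor, Matrix.mul_apply, Matrix.of_apply]
  rw [Finset.prod_univ_sum, Fintype.piFinset_univ]
  exact Finset.sum_congr rfl fun x _ => (Finset.prod_mul_distrib).symm

lemma tensor_one {n : ℕ} : tensor (fun _ : Fin n => (1 : Matrix (Fin 2) (Fin 2) ℂ)) = 1 := by
  ext f g
  simp only [tensor, Matrix.of_apply, Matrix.one_apply]
  by_cases h : f = g
  · subst h; simp
  · rw [if_neg h]
    obtain ⟨j, hj⟩ := Function.ne_iff.mp h
    exact Finset.prod_eq_zero (Finset.mem_univ j) (by simp [Matrix.one_apply, hj])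

lemma tensor_congr {n : ℕ} {M N : Fin n → Matrix (Fin 2) (Fin 2) ℂ} (h : ∀ j, M j = N j) :
    tensor M = tensor N := by rw [funext h]

lemma tensor_smul_single {n : ℕ} (M N : Fin n → Matrix (Fin 2) (Fin 2) ℂ) (j0 : Fin n)
    (c : ℂ) (h0 : M j0 = c • N j0) (h : ∀ j, j ≠ j0 → M j = N j) :
    tensor M = c • tensor N := by
  ext f g
  simp only [tensor, Matrix.of_apply, Matrix.smul_apply, smul_eq_mul]
  rw [← Finset.mul_prod_erase Finset.univ _ (Finset.mem_univ j0),
      ← Finset.mul_prod_erase Finset.univ (fun i => N i (f i) (g i)) (Finset.mem_univ j0),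
      h0]
  have : ∀ i ∈ Finset.univ.erase j0, M i (f i) (g i) = N i (f i) (g i) := fun i hi => by
    rw [h i (Finset.mem_erase.mp hi).1]
  rw [Finset.prod_congr rfl this]
  simp [mul_assoc]

-- Pauli algebra
lemma σX_mul_σX : σX * σX = 1 := by
  ext i j; fin_cases i <;> fin_cases j <;>
    simp [σX, Matrix.mul_apply, Fin.sum_univ_two, Matrix.one_apply]
lemma σY_mul_σY : σY * σY = 1 := by
  ext i j; fin_cases i <;> fin_cases j <;>
    simp [σY, Matrix.mul_apply, Fin.sum_univ_two, Matrix.one_apply]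
lemma σZ_mul_σZ : σZ * σZ = 1 := by
  ext i j; fin_cases i <;> fin_cases j <;>
    simp [σZ, Matrix.mul_apply, Fin.sum_univ_two, Matrix.one_apply]
lemma σX_mul_σY : σX * σY = Complex.I • σZ := by
  ext i j; fin_cases i <;> fin_cases j <;>
    simp [σX, σY, σZ, Matrix.mul_apply, Fin.sum_univ_two]
lemma σY_mul_σX : σY * σX = -(σX * σY) := by
  rw [σX_mul_σY]
  ext i j; fin_cases i <;> fin_cases j <;>
    simp [σX, σY, σZ, Matrix.mul_apply, Fin.sum_univ_two]
lemma σZ_mul_σX : σZ * σX = -(σX * σZ) := by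
  ext i j; fin_cases i <;> fin_cases j <;>
    simp [σX, σZ, Matrix.mul_apply, Fin.sum_univ_two]
lemma σZ_mul_σY : σZ * σY = -(σY * σZ) := by
  ext i j; fin_cases i <;> fin_cases j <;>
    simp [σY, σZ, Matrix.mul_apply, Fin.sum_univ_two]
lemma σY_mul_σZ : σY * σZ = Complex.I • σX := by
  ext i j; fin_cases i <;> fin_cases j <;>
    simp [σX, σY, σZ, Matrix.mul_apply, Fin.sum_univ_two]



def mfac (n : ℕ) (μ : Fin (2 * n)) : Fin n → Matrix (Fin 2) (Fin 2) ℂ := fun j =>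
  if (j : ℕ) < (μ : ℕ) / 2 then σZ
  else if (j : ℕ) = (μ : ℕ) / 2 then (if (μ : ℕ) % 2 = 0 then σX else σY)
  else 1

lemma majorana_eq {n : ℕ} (μ : Fin (2 * n)) : majorana n μ = tensor (mfac n μ) := rfl

lemma majorana_sq {n : ℕ} (μ : Fin (2 * n)) : majorana n μ * majorana n μ = 1 := by
  rw [majorana_eq, tensor_mul, ← tensor_one]
  apply tensor_congr
  intro j
  unfold mfac
  by_cases h1 : (j : ℕ) < (μ : ℕ) / 2
  · simp [h1, σZ_mul_σZ]
  · by_cases h2 : (j : ℕ) = (μ : ℕ) / 2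
    · by_cases h3 : (μ : ℕ) % 2 = 0 <;> simp [h1, h2, h3, σX_mul_σX, σY_mul_σY]
    · simp [h1, h2]

lemma majorana_anticomm {n : ℕ} {μ ν : Fin (2 * n)} (h : μ < ν) :
    majorana n ν * majorana n μ = -(majorana n μ * majorana n ν) := by
  have hμ2 : (μ : ℕ) / 2 < n := by have := μ.isLt; omega
  have hh : (μ : ℕ) / 2 ≤ (ν : ℕ) / 2 := Nat.div_le_div_right (le_of_lt h)
  rw [majorana_eq, majorana_eq, tensor_mul, tensor_mul]
  have key : tensor (fun j => mfac n ν j * mfac n μ j)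
      = (-1 : ℂ) • tensor (fun j => mfac n μ j * mfac n ν j) := by
    apply tensor_smul_single _ _ ⟨(μ : ℕ) / 2, hμ2⟩
    · -- at j0
      show mfac n ν _ * mfac n μ _ = (-1 : ℂ) • (mfac n μ _ * mfac n ν _)
      have hμfac : mfac n μ ⟨(μ : ℕ) / 2, hμ2⟩ = (if (μ : ℕ) % 2 = 0 then σX else σY) := by
        unfold mfac; simp
      by_cases hab : (μ : ℕ) / 2 = (ν : ℕ) / 2
      · -- same site: μ even, ν = μ + 1
        have hμe : (μ : ℕ) % 2 = 0 := by have := Fin.lt_iff_val_lt_val.mp h; omega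
        have hνo : (ν : ℕ) % 2 = 1 := by have := Fin.lt_iff_val_lt_val.mp h; omega
        have hνfac : mfac n ν ⟨(μ : ℕ) / 2, hμ2⟩ = σY := by
          unfold mfac; simp [hab, hνo]
        rw [hμfac, hνfac, if_pos hμe, σY_mul_σX]
        simp
      · have hlt : (μ : ℕ) / 2 < (ν : ℕ) / 2 := lt_of_le_of_ne hh hab
        have hνfac : mfac n ν ⟨(μ : ℕ) / 2, hμ2⟩ = σZ := by
          unfold mfac; simp [hlt]
        rw [hμfac, hνfac]
        by_cases h3 : (μ : ℕ) % 2 = 0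
        · rw [if_pos h3, σZ_mul_σX]; simp
        · rw [if_neg h3, σZ_mul_σY]; simp
    · intro j hj
      have hj' : (j : ℕ) ≠ (μ : ℕ) / 2 := fun hc => hj (Fin.ext hc)
      by_cases h1 : (j : ℕ) < (μ : ℕ) / 2
      · have h1' : (j : ℕ) < (ν : ℕ) / 2 := lt_of_lt_of_le h1 hh
        unfold mfac
        simp [h1, h1']
      · have h2 : (μ : ℕ) / 2 < (j : ℕ) := by omega
        have hμfac : mfac n μ j = 1 := by unfold mfac; simp [h1, hj']
        rw [hμfac, mul_one, one_mul]
  rw [key]; simp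

lemma majorana_swap {n : ℕ} {μ ν : Fin (2 * n)} (h : μ ≠ ν) :
    majorana n ν * majorana n μ = -(majorana n μ * majorana n ν) := by
  rcases lt_or_gt_of_ne h with h' | h'
  · exact majorana_anticomm h'
  · rw [majorana_anticomm h', neg_neg]



lemma gen_Z {n : ℕ} (j : Fin n) (h1 : 2 * (j : ℕ) < 2 * n) (h2 : 2 * (j : ℕ) + 1 < 2 * n) :
    majorana n ⟨2 * (j : ℕ), h1⟩ * majorana n ⟨2 * (j : ℕ) + 1, h2⟩
      = Complex.I • pauliZ n j := by
  rw [majorana_eq, majorana_eq, tensor_mul]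
  unfold pauliZ
  apply tensor_smul_single _ _ j
  · show mfac n _ j * mfac n _ j = Complex.I • _
    have e1 : mfac n ⟨2 * (j : ℕ), h1⟩ j = σX := by
      unfold mfac; simp [Nat.mul_div_cancel_left _ (by norm_num : 0 < 2),
        Nat.mul_mod_right]
    have e2 : mfac n ⟨2 * (j : ℕ) + 1, h2⟩ j = σY := by
      unfold mfac
      have : (2 * (j : ℕ) + 1) / 2 = (j : ℕ) := by omega
      have h2' : (2 * (j : ℕ) + 1) % 2 = 1 := by omega
      simp [this, h2']
    rw [e1, e2, if_pos rfl, σX_mul_σY]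
  · intro k hk
    have hk' : (k : ℕ) ≠ (j : ℕ) := fun hc => hk (Fin.ext hc)
    rw [if_neg hk]
    unfold mfac
    have d1 : ((⟨2 * (j : ℕ), h1⟩ : Fin (2 * n)) : ℕ) / 2 = (j : ℕ) := by
      simp only [Fin.val_mk]; omega
    have d2 : ((⟨2 * (j : ℕ) + 1, h2⟩ : Fin (2 * n)) : ℕ) / 2 = (j : ℕ) := by
      simp only [Fin.val_mk]; omega
    rw [d1, d2]
    by_cases hlt : (k : ℕ) < (j : ℕ)
    · simp [hlt, σZ_mul_σZ]
    · simp [hlt, hk']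

lemma gen_XX {n : ℕ} (j : Fin n) (hj : (j : ℕ) + 1 < n)
    (h1 : 2 * (j : ℕ) + 1 < 2 * n) (h2 : 2 * (j : ℕ) + 2 < 2 * n) :
    majorana n ⟨2 * (j : ℕ) + 1, h1⟩ * majorana n ⟨2 * (j : ℕ) + 2, h2⟩
      = Complex.I • pauliXX n j := by
  rw [majorana_eq, majorana_eq, tensor_mul]
  unfold pauliXX
  apply tensor_smul_single _ _ j
  · have e1 : mfac n ⟨2 * (j : ℕ) + 1, h1⟩ j = σY := by
      unfold mfac
      have d : (2 * (j : ℕ) + 1) / 2 = (j : ℕ) := by omega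
      have m : (2 * (j : ℕ) + 1) % 2 = 1 := by omega
      simp [d, m]
    have e2 : mfac n ⟨2 * (j : ℕ) + 2, h2⟩ j = σZ := by
      unfold mfac
      have d : (2 * (j : ℕ) + 2) / 2 = (j : ℕ) + 1 := by omega
      simp [d]
    show mfac n _ j * mfac n _ j = Complex.I • _
    rw [e1, e2, if_pos (Or.inl rfl), σY_mul_σZ]
  · intro k hk
    have hk' : (k : ℕ) ≠ (j : ℕ) := fun hc => hk (Fin.ext hc)
    unfold mfac
    have d1 : (2 * (j : ℕ) + 1) / 2 = (j : ℕ) := by omega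
    have d2 : (2 * (j : ℕ) + 2) / 2 = (j : ℕ) + 1 := by omega
    have m2 : (2 * (j : ℕ) + 2) % 2 = 0 := by omega
    have m1 : (2 * (j : ℕ) + 1) % 2 = 1 := by omega
    simp only [Fin.val_mk, d1, d2, m1, m2]
    by_cases hlt : (k : ℕ) < (j : ℕ)
    · have hno : ¬((k : ℕ) = (j : ℕ) ∨ (k : ℕ) = (j : ℕ) + 1) := by omega
      simp [hlt, (by omega : (k : ℕ) < (j : ℕ) + 1), hno, σZ_mul_σZ]
    · by_cases heq : (k : ℕ) = (j : ℕ) + 1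
      · simp [hlt, hk', heq]
      · have hno : ¬((k : ℕ) = (j : ℕ) ∨ (k : ℕ) = (j : ℕ) + 1) := by omega
        have hge : ¬ (k : ℕ) < (j : ℕ) + 1 := by omega
        simp [hlt, hk', heq, hno, hge]

-- generic noncommutative ring helpers
section RingHelpers
variable {R : Type*} [Ring R] {A B C D : R}

lemma quad_same (hBA : B * A = -(A * B)) (hAA : A * A = 1) (hBB : B * B = 1) :
    (A * B) * (A * B) = -1 := by
  have : (A * B) * (A * B) = A * (B * A) * B := by noncomm_ring
  rw [this, hBA]
  have : A * -(A * B) * B = -((A * A) * (B * B)) := by noncomm_ring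
  rw [this, hAA, hBB, mul_one]

lemma quad_nurho (hBB : B * B = 1) : (A * B) * (B * D) = A * D := by
  have : (A * B) * (B * D) = A * ((B * B) * D) := by noncomm_ring
  rw [this, hBB, one_mul]

lemma quad_nutau (hCB : C * B = -(B * C)) (hBB : B * B = 1) :
    (A * B) * (C * B) = -(A * C) := by
  have : (A * B) * (C * B) = A * ((B * C) * B) := by noncomm_ring
  rw [this, ← neg_neg (B * C), ← hCB]
  have : A * (-(C * B) * B) = -(A * C * (B * B)) := by noncomm_ring
  rw [this, hBB, mul_one]

lemma quad_murho (hBA : B * A = -(A * B)) (hAA : A * A = 1) :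
    (A * B) * (A * D) = -(B * D) := by
  have : (A * B) * (A * D) = A * (B * A) * D := by noncomm_ring
  rw [this, hBA]
  have : A * -(A * B) * D = -((A * A) * (B * D)) := by noncomm_ring
  rw [this, hAA, one_mul]

lemma quad_mutau (hCA : C * A = -(A * C)) (hBA : B * A = -(A * B)) (hAA : A * A = 1) :
    (A * B) * (C * A) = B * C := by
  have : (A * B) * (C * A) = A * B * (C * A) := by noncomm_ring
  rw [this, hCA]
  have : A * B * -(A * C) = -(A * (B * A) * C) := by noncomm_ring
  rw [this, hBA]
  have : -(A * -(A * B) * C) = (A * A) * (B * C) := by noncomm_ring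
  rw [this, hAA, one_mul]
end RingHelpers

-- trace lemmas
lemma trace_one_NMat (n : ℕ) : Matrix.trace (1 : NMat n) = (2 ^ n : ℂ) := by
  rw [Matrix.trace_one]
  simp [Fintype.card_fun]

lemma trace2_zero {n : ℕ} {α β : Fin (2 * n)} (h : α ≠ β) :
    Matrix.trace (majorana n α * majorana n β) = 0 := by
  have h1 := Matrix.trace_mul_comm (majorana n α) (majorana n β)
  rw [majorana_swap h, Matrix.trace_neg] at h1
  have h2 : (2 : ℂ) * Matrix.trace (majorana n α * majorana n β) = 0 := by
    linear_combination h1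
  simpa using h2

lemma trace4_zero {n : ℕ} {a b c d : Fin (2 * n)} (hab : a ≠ b) (hac : a ≠ c) (had : a ≠ d) :
    Matrix.trace (majorana n a * (majorana n b * (majorana n c * majorana n d))) = 0 := by
  set A := majorana n a; set B := majorana n b; set C := majorana n c; set D := majorana n d
  have key : (B * (C * D)) * A = -(A * (B * (C * D))) := by
    calc (B * (C * D)) * A = B * (C * (D * A)) := by noncomm_ring
    _ = B * (C * (-(A * D))) := by rw [majorana_swap had]
    _ = -(B * ((C * A) * D)) := by noncomm_ring
    _ = -(B * ((-(A * C)) * D)) := by rw [majorana_swap hac]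
    _ = (B * A) * (C * D) := by noncomm_ring
    _ = (-(A * B)) * (C * D) := by rw [majorana_swap hab]
    _ = -(A * (B * (C * D))) := by noncomm_ring
  have h1 := Matrix.trace_mul_comm A (B * (C * D))
  rw [key, Matrix.trace_neg] at h1
  have h2 : (2 : ℂ) * Matrix.trace (A * (B * (C * D))) = 0 := by linear_combination h1
  simpa using h2

lemma trace_pair_pair {n : ℕ} {μ ν ρ τ : Fin (2 * n)} (hμν : μ < ν) (hρτ : ρ < τ) :
    Matrix.trace ((majorana n μ * majorana n ν) * (majorana n ρ * majorana n τ))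
      = if μ = ρ ∧ ν = τ then -(2 ^ n : ℂ) else 0 := by
  by_cases heq : μ = ρ ∧ ν = τ
  · obtain ⟨h1, h2⟩ := heq
    rw [if_pos ⟨h1, h2⟩, ← h1, ← h2,
      quad_same (majorana_swap (ne_of_lt hμν)) (majorana_sq μ) (majorana_sq ν),
      Matrix.trace_neg, trace_one_NMat]
  · rw [if_neg heq]
    by_cases hνρ : ν = ρ
    · rw [← hνρ, quad_nurho (majorana_sq ν)]
      exact trace2_zero (ne_of_lt (lt_trans hμν (hνρ ▸ hρτ)))
    · by_cases hντ : ν = τ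
      · have hμρ : μ ≠ ρ := fun hc => heq ⟨hc, hντ⟩
        rw [← hντ, quad_nutau (majorana_swap hνρ) (majorana_sq ν),
          Matrix.trace_neg, trace2_zero hμρ, neg_zero]
      · by_cases hμρ : μ = ρ
        · rw [← hμρ, quad_murho (majorana_swap (ne_of_lt hμν)) (majorana_sq μ),
            Matrix.trace_neg, trace2_zero hντ, neg_zero]
        · by_cases hμτ : μ = τ
          · rw [← hμτ, quad_mutau (majorana_swap hμρ) (majorana_swap (ne_of_lt hμν))
              (majorana_sq μ)]
            exact trace2_zero hνρ
          · have h4 : Matrix.trace (majorana n μ * (majorana n ν * (majorana n ρ * majorana n τ))) = 0 :=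
              trace4_zero (ne_of_lt hμν) hμρ hμτ
            rw [show (majorana n μ * majorana n ν) * (majorana n ρ * majorana n τ)
                = majorana n μ * (majorana n ν * (majorana n ρ * majorana n τ)) by noncomm_ring]
            exact h4

-- the index type of ordered pairs and the quadratic family
abbrev PairIdx (n : ℕ) := {p : Fin (2 * n) × Fin (2 * n) // p.1 < p.2}

def quadFam (n : ℕ) (p : PairIdx n) : NMat n := majorana n p.1.1 * majorana n p.1.2

def quadSet (n : ℕ) : Set (NMat n) :=
  {M | ∃ μ ν : Fin (2 * n), μ < ν ∧ M = majorana n μ * majorana n ν}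

lemma quadSet_eq_range (n : ℕ) : quadSet n = Set.range (quadFam n) := by
  ext M
  constructor
  · rintro ⟨μ, ν, h, rfl⟩; exact ⟨⟨(μ, ν), h⟩, rfl⟩
  · rintro ⟨⟨⟨μ, ν⟩, h⟩, rfl⟩; exact ⟨μ, ν, h, rfl⟩

lemma quadFam_linearIndependent (n : ℕ) : LinearIndependent ℝ (quadFam n) := by
  rw [Fintype.linearIndependent_iff]
  intro g hsum q
  have h0 : Matrix.trace ((∑ j, g j • quadFam n j) * quadFam n q) = 0 := by
    rw [hsum, zero_mul, Matrix.trace_zero]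
  rw [Finset.sum_mul] at h0
  have hterm : ∀ j : PairIdx n,
      (g j • quadFam n j) * quadFam n q = g j • (quadFam n j * quadFam n q) := fun j =>
    smul_mul_assoc _ _ _
  rw [Finset.sum_congr rfl (fun j _ => hterm j), Matrix.trace_sum] at h0
  have htr : ∀ j : PairIdx n, Matrix.trace (quadFam n j * quadFam n q)
      = if j = q then -(2 ^ n : ℂ) else 0 := by
    intro j
    rw [show (Matrix.trace (quadFam n j * quadFam n q)) = _ from
      trace_pair_pair j.2 q.2]
    congr 1
    simp only [eq_iff_iff]
    constructor
    · rintro ⟨h1, h2⟩; exact Subtype.ext (Prod.ext h1 h2)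
    · rintro rfl; exact ⟨rfl, rfl⟩
  have h1 : ∑ j : PairIdx n, g j • Matrix.trace (quadFam n j * quadFam n q) = 0 := by
    rw [← h0]
    exact Finset.sum_congr rfl fun j _ => by rw [Matrix.trace_smul]
  rw [Finset.sum_congr rfl (fun j _ => by rw [htr j])] at h1
  have h2 : ∀ j : PairIdx n,
      g j • (if j = q then -(2 ^ n : ℂ) else 0) = if j = q then g j • (-(2 ^ n : ℂ)) else 0 := by
    intro j; split <;> simp
  rw [Finset.sum_congr rfl (fun j _ => h2 j), Finset.sum_ite_eq' Finset.univ q] at h1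
  simp only [Finset.mem_univ, if_true] at h1
  have h3 : g q = 0 ∨ -(2 ^ n : ℂ) = 0 := smul_eq_zero.mp h1
  rcases h3 with h3 | h3
  · exact h3
  · exact absurd h3 (by simp [pow_ne_zero])

def pairEquiv (n : ℕ) : PairIdx n ≃ Σ a : Fin (2 * n), {b : Fin (2 * n) // a < b} where
  toFun p := ⟨p.1.1, p.1.2, p.2⟩
  invFun s := ⟨(s.1, s.2.1), s.2.2⟩
  left_inv p := rfl
  right_inv s := rfl

lemma card_pairIdx (n : ℕ) : Fintype.card (PairIdx n) = n * (2 * n - 1) := by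
  rw [Fintype.card_congr (pairEquiv n), Fintype.card_sigma]
  have h1 : ∀ a : Fin (2 * n), Fintype.card {b : Fin (2 * n) // a < b} = 2 * n - 1 - (a : ℕ) := by
    intro a
    rw [Fintype.card_subtype]
    rw [show (Finset.filter (fun b => a < b) Finset.univ) = Finset.Ioi a from
      Finset.filter_lt_eq_Ioi]
    exact Fin.card_Ioi a
  rw [Finset.sum_congr rfl fun a _ => h1 a]
  rw [Fin.sum_univ_eq_sum_range (fun i => 2 * n - 1 - i) (2 * n)]
  rw [show (∑ i ∈ Finset.range (2 * n), (2 * n - 1 - i)) = ∑ i ∈ Finset.range (2 * n), i from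
    Finset.sum_range_reflect (fun i => i) (2 * n)]
  have h2 := Finset.sum_range_id_mul_two (2 * n)
  have h3 : 2 * n * (2 * n - 1) = 2 * (n * (2 * n - 1)) := by cases n <;> ring_nf <;> omega
  omega

lemma quad_comm {R : Type*} [Ring R] {A B C D : R}
    (hCA : C * A = -(A * C)) (hCB : C * B = -(B * C))
    (hDA : D * A = -(A * D)) (hDB : D * B = -(B * D)) :
    (C * D) * (A * B) = (A * B) * (C * D) := by
  calc (C * D) * (A * B) = C * ((D * A) * B) := by noncomm_ring
  _ = C * ((-(A * D)) * B) := by rw [hDA]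
  _ = -((C * A) * (D * B)) := by noncomm_ring
  _ = -((-(A * C)) * (D * B)) := by rw [hCA]
  _ = A * (C * (D * B)) := by noncomm_ring
  _ = A * (C * (-(B * D))) := by rw [hDB]
  _ = -(A * ((C * B) * D)) := by noncomm_ring
  _ = -(A * ((-(B * C)) * D)) := by rw [hCB]
  _ = (A * B) * (C * D) := by noncomm_ring


lemma mem_cc {n : ℕ} {α β : Fin (2 * n)} (h : α ≠ β) :
    majorana n α * majorana n β ∈ Submodule.span ℝ (quadSet n) := by
  rcases lt_or_gt_of_ne h with h' | h'
  · exact Submodule.subset_span ⟨α, β, h', rfl⟩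
  · rw [show majorana n α * majorana n β = -(majorana n β * majorana n α) from
      majorana_swap (ne_of_lt h')]
    exact Submodule.neg_mem _ (Submodule.subset_span ⟨β, α, h', rfl⟩)

lemma bracket_quad_mem {n : ℕ} {x y : NMat n} (hx : x ∈ quadSet n) (hy : y ∈ quadSet n) :
    ⁅x, y⁆ ∈ Submodule.span ℝ (quadSet n) := by
  obtain ⟨μ, ν, hμν, rfl⟩ := hx
  obtain ⟨ρ, τ, hρτ, rfl⟩ := hy
  rw [Ring.lie_def]
  by_cases hνρ : ν = ρ
  · subst hνρ
    rw [quad_nurho (majorana_sq ν),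
      quad_mutau (majorana_swap (Ne.symm (ne_of_lt hμν))) (majorana_swap (ne_of_lt hρτ))
        (majorana_sq ν)]
    have hμτ : μ ≠ τ := ne_of_lt (lt_trans hμν hρτ)
    exact Submodule.sub_mem _ (mem_cc hμτ) (mem_cc (Ne.symm hμτ))
  · by_cases hντ : ν = τ
    · subst hντ
      by_cases hμρ : μ = ρ
      · subst hμρ; simp
      · rw [quad_nutau (majorana_swap hνρ) (majorana_sq ν),
          quad_nutau (majorana_swap (Ne.symm (ne_of_lt hμν))) (majorana_sq ν)]
        exact Submodule.sub_mem _ (Submodule.neg_mem _ (mem_cc hμρ))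
          (Submodule.neg_mem _ (mem_cc (Ne.symm hμρ)))
    · by_cases hμρ : μ = ρ
      · subst hμρ
        rw [quad_murho (majorana_swap (ne_of_lt hμν)) (majorana_sq μ),
          quad_murho (majorana_swap (ne_of_lt hρτ)) (majorana_sq μ)]
        exact Submodule.sub_mem _ (Submodule.neg_mem _ (mem_cc hντ))
          (Submodule.neg_mem _ (mem_cc (Ne.symm hντ)))
      · by_cases hμτ : μ = τ
        · subst hμτ
          rw [quad_mutau (majorana_swap hμρ) (majorana_swap (ne_of_lt hμν)) (majorana_sq μ),
            quad_nurho (majorana_sq μ)]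
          exact Submodule.sub_mem _ (mem_cc hνρ) (mem_cc (Ne.symm hνρ))
        · rw [quad_comm (majorana_swap hμρ) (majorana_swap hνρ)
            (majorana_swap hμτ) (majorana_swap hντ), sub_self]
          exact Submodule.zero_mem _

lemma bracket_span_closed {n : ℕ} {x y : NMat n}
    (hx : x ∈ Submodule.span ℝ (quadSet n)) (hy : y ∈ Submodule.span ℝ (quadSet n)) :
    ⁅x, y⁆ ∈ Submodule.span ℝ (quadSet n) := by
  induction hx, hy using Submodule.span_induction₂ with
  | mem_mem a b ha hb => exact bracket_quad_mem ha hb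
  | zero_left y hy => simp
  | zero_right x hx => simp
  | add_left x y z hx hy hz h1 h2 => rw [add_lie]; exact Submodule.add_mem _ h1 h2
  | add_right x y z hx hy hz h1 h2 => rw [lie_add]; exact Submodule.add_mem _ h1 h2
  | smul_left r x y hx hy h1 => rw [smul_lie]; exact Submodule.smul_mem _ r h1
  | smul_right r x y hx hy h1 => rw [lie_smul]; exact Submodule.smul_mem _ r h1

def quadLie (n : ℕ) : LieSubalgebra ℝ (NMat n) :=
  { Submodule.span ℝ (quadSet n) with
    lie_mem' := fun hx hy => bracket_span_closed hx hy }

lemma gen_subset_span {n : ℕ} : genSet n ⊆ Submodule.span ℝ (quadSet n) := by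
  rintro M (⟨j, rfl⟩ | ⟨j, hj, rfl⟩)
  · have h1 : 2 * (j : ℕ) < 2 * n := by have := j.isLt; omega
    have h2 : 2 * (j : ℕ) + 1 < 2 * n := by have := j.isLt; omega
    rw [← gen_Z j h1 h2]
    exact Submodule.subset_span ⟨⟨2 * (j : ℕ), h1⟩, ⟨2 * (j : ℕ) + 1, h2⟩,
      by simp [Fin.lt_iff_val_lt_val], rfl⟩
  · have h1 : 2 * (j : ℕ) + 1 < 2 * n := by omega
    have h2 : 2 * (j : ℕ) + 2 < 2 * n := by omega
    rw [← gen_XX j hj h1 h2]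
    exact Submodule.subset_span ⟨⟨2 * (j : ℕ) + 1, h1⟩, ⟨2 * (j : ℕ) + 2, h2⟩,
      by simp [Fin.lt_iff_val_lt_val], rfl⟩

lemma consec_mem {n : ℕ} (α β : Fin (2 * n)) (h : (β : ℕ) = (α : ℕ) + 1) :
    majorana n α * majorana n β ∈ LieSubalgebra.lieSpan ℝ (NMat n) (genSet n) := by
  rcases Nat.even_or_odd (α : ℕ) with ⟨j, hj⟩ | ⟨j, hj⟩
  · have hjn : j < n := by have := β.isLt; omega
    set jf : Fin n := ⟨j, hjn⟩ with hjf
    have h1 : 2 * (jf : ℕ) < 2 * n := by simp only [hjf]; omega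
    have h2 : 2 * (jf : ℕ) + 1 < 2 * n := by simp only [hjf]; have := β.isLt; omega
    have eα : α = ⟨2 * (jf : ℕ), h1⟩ := by apply Fin.ext; simp only [hjf]; omega
    have eβ : β = ⟨2 * (jf : ℕ) + 1, h2⟩ := by apply Fin.ext; simp only [hjf]; omega
    rw [eα, eβ, gen_Z jf h1 h2]
    exact LieSubalgebra.subset_lieSpan (Or.inl ⟨jf, rfl⟩)
  · have hjn : (j : ℕ) + 1 < n := by have := β.isLt; omega
    set jf : Fin n := ⟨j, by omega⟩ with hjf
    have hjf1 : (jf : ℕ) + 1 < n := by simp only [hjf]; omega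
    have h1 : 2 * (jf : ℕ) + 1 < 2 * n := by simp only [hjf]; omega
    have h2 : 2 * (jf : ℕ) + 2 < 2 * n := by simp only [hjf]; omega
    have eα : α = ⟨2 * (jf : ℕ) + 1, h1⟩ := by apply Fin.ext; simp only [hjf]; omega
    have eβ : β = ⟨2 * (jf : ℕ) + 2, h2⟩ := by apply Fin.ext; simp only [hjf]; omega
    rw [eα, eβ, gen_XX jf hjf1 h1 h2]
    exact LieSubalgebra.subset_lieSpan (Or.inr ⟨jf, hjf1, rfl⟩)

lemma pair_mem {n : ℕ} (gap : ℕ) : ∀ (μ ν : Fin (2 * n)), (ν : ℕ) = (μ : ℕ) + gap + 1 →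
    majorana n μ * majorana n ν ∈ LieSubalgebra.lieSpan ℝ (NMat n) (genSet n) := by
  induction gap with
  | zero => intro μ ν h; exact consec_mem μ ν h
  | succ g ih =>
    intro μ ν h
    have hν1 : (μ : ℕ) + g + 1 < 2 * n := by have := ν.isLt; omega
    set ν' : Fin (2 * n) := ⟨(μ : ℕ) + g + 1, hν1⟩ with hν'
    have h1 := ih μ ν' (by simp only [hν'])
    have h2 := consec_mem ν' ν (by simp only [hν']; omega)
    have hμν' : μ ≠ ν' := Fin.ne_of_val_ne (by simp only [hν']; omega)
    have hν'ν : ν' ≠ ν := Fin.ne_of_val_ne (by simp only [hν']; omega)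
    have hμν : μ ≠ ν := Fin.ne_of_val_ne (by omega)
    have hbr : ⁅majorana n μ * majorana n ν', majorana n ν' * majorana n ν⁆
        = (2 : ℝ) • (majorana n μ * majorana n ν) := by
      rw [Ring.lie_def, quad_nurho (majorana_sq ν'),
        quad_mutau (majorana_swap (Ne.symm hμν')) (majorana_swap hν'ν) (majorana_sq ν'),
        majorana_swap hμν, sub_neg_eq_add, two_smul]
    have hrepr : majorana n μ * majorana n ν
        = (1 / 2 : ℝ) • ⁅majorana n μ * majorana n ν', majorana n ν' * majorana n ν⁆ := by
      rw [hbr, smul_smul]; norm_num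
    rw [hrepr]
    exact (LieSubalgebra.lieSpan ℝ (NMat n) (genSet n)).smul_mem _
      ((LieSubalgebra.lieSpan ℝ (NMat n) (genSet n)).lie_mem h1 h2)


theorem matchgate_dla (n : ℕ) (hn : 1 ≤ n) :
    (LieSubalgebra.lieSpan ℝ (NMat n) (genSet n)).toSubmodule =
      Submodule.span ℝ
        {M | ∃ μ ν : Fin (2 * n), μ < ν ∧ M = majorana n μ * majorana n ν}
    ∧ Module.finrank ℝ (LieSubalgebra.lieSpan ℝ (NMat n) (genSet n)) = n * (2 * n - 1) := by
  have hspan : (LieSubalgebra.lieSpan ℝ (NMat n) (genSet n)).toSubmodule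
      = Submodule.span ℝ (quadSet n) := by
    apply le_antisymm
    · have hle : LieSubalgebra.lieSpan ℝ (NMat n) (genSet n) ≤ quadLie n :=
        LieSubalgebra.lieSpan_le.mpr gen_subset_span
      exact fun x hx => hle hx
    · rw [Submodule.span_le]
      rintro M ⟨μ, ν, h, rfl⟩
      exact pair_mem ((ν : ℕ) - (μ : ℕ) - 1) μ ν
        (by have := Fin.lt_iff_val_lt_val.mp h; omega)
  refine ⟨hspan, ?_⟩
  have h3 : (LieSubalgebra.lieSpan ℝ (NMat n) (genSet n)).toSubmodule
      = Submodule.span ℝ (Set.range (quadFam n)) := by rw [hspan, quadSet_eq_range]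
  have h2 : Module.finrank ℝ (Submodule.span ℝ (Set.range (quadFam n)))
      = Fintype.card (PairIdx n) := finrank_span_eq_card (quadFam_linearIndependent n)
  calc Module.finrank ℝ (LieSubalgebra.lieSpan ℝ (NMat n) (genSet n))
      = Module.finrank ℝ (LieSubalgebra.lieSpan ℝ (NMat n) (genSet n)).toSubmodule := rfl
  _ = Module.finrank ℝ (Submodule.span ℝ (Set.range (quadFam n))) := by rw [h3]
  _ = Fintype.card (PairIdx n) := h2
  _ = n * (2 * n - 1) := card_pairIdx n


end
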